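/- A finite subset X of unit vectors in ℂ^d satisfying (1/|X|²) Σ_{ψ,φ ∈ X} |⟨ψ|φ⟩|^{2k} = 1/C(d+k−1, k) for k = 0, 1, 2 whenever X consists of d(d+1) vectors forming d+1 mutually unbiased bases: indeed, a complete set of d+1 mutually unbiased bases satisfies these three moment equations (the k=1 sum equals 1/d and the k=2 sum equals 2/(d(d+1))). -/

import Mathlib

open Matrix BigOperators

lemma sum4_aux (d : ℕ) (C : ℝ) :
    ∑ a : Fin (d + 1), ∑ b : Fin d, ∑ a' : Fin (d + 1), ∑ b' : Fin d,
      (if a = a' ∧ b = b' then (1:ℝ) else if a = a' then 0 else C)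
    = (d:ℝ) * (d + 1) + (d:ℝ)^2 * ((d+1)^2 - (d+1)) * C := by
  have inner : ∀ (a a' : Fin (d+1)), ∑ b : Fin d, ∑ b' : Fin d,
      (if a = a' ∧ b = b' then (1:ℝ) else if a = a' then 0 else C)
      = if a = a' then (d:ℝ) else (d:ℝ)^2 * C := by
    intro a a'
    by_cases h : a = a' <;>
      simp [h, Finset.sum_ite_eq, Finset.sum_const, Finset.card_univ, sq, mul_assoc]
  calc ∑ a : Fin (d + 1), ∑ b : Fin d, ∑ a' : Fin (d + 1), ∑ b' : Fin d,
        (if a = a' ∧ b = b' then (1:ℝ) else if a = a' then 0 else C)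
      = ∑ a : Fin (d + 1), ∑ a' : Fin (d + 1), ∑ b : Fin d, ∑ b' : Fin d,
        (if a = a' ∧ b = b' then (1:ℝ) else if a = a' then 0 else C) :=
        Finset.sum_congr rfl fun a _ => Finset.sum_comm
    _ = ∑ a : Fin (d + 1), ∑ a' : Fin (d + 1), (if a = a' then (d:ℝ) else (d:ℝ)^2 * C) :=
        Finset.sum_congr rfl fun a _ => Finset.sum_congr rfl fun a' _ => inner a a'
    _ = (d:ℝ) * (d + 1) + (d:ℝ)^2 * ((d+1)^2 - (d+1)) * C := by
        have h : ∀ a a' : Fin (d+1), (if a = a' then (d:ℝ) else (d:ℝ)^2*C)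
            = (d:ℝ)^2*C + (if a = a' then (d:ℝ) - (d:ℝ)^2*C else 0) := by
          intro a a'; split_ifs <;> ring
        simp only [h, Finset.sum_add_distrib, Finset.sum_const, Finset.card_univ,
          Fintype.card_fin, nsmul_eq_mul, Finset.sum_ite_eq, Finset.mem_univ, if_true]
        push_cast; ring

theorem mub_moment_equations
    (d : ℕ) (hd : 0 < d) (ψ : Fin (d + 1) → Fin d → (Fin d → ℂ))
    (hMUB : ∀ a b a' b', ‖star (ψ a b) ⬝ᵥ ψ a' b'‖ =
      if a = a' ∧ b = b' then 1 else if a = a' then 0 else 1 / Real.sqrt d) :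
    ∀ k : ℕ, k ≤ 2 →
      (1 / ((d * (d + 1) : ℝ)) ^ 2) *
        ∑ a : Fin (d + 1), ∑ b : Fin d, ∑ a' : Fin (d + 1), ∑ b' : Fin d,
          ‖star (ψ a b) ⬝ᵥ ψ a' b'‖ ^ (2 * k)
      = 1 / (Nat.choose (d + k - 1) k : ℝ) := by
  intro k hk
  have hd0 : (d:ℝ) ≠ 0 := Nat.cast_ne_zero.mpr hd.ne'
  have hd1 : (d:ℝ) + 1 ≠ 0 := by positivity
  have habs : ∀ (a a' : Fin (d+1)) (b b' : Fin d),
      ‖star (ψ a b) ⬝ᵥ ψ a' b'‖ ^ (2*k) =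
      (if a = a' ∧ b = b' then (1:ℝ) else if a = a' then 0 else 1 / Real.sqrt d) ^ (2*k) := by
    intro a a' b b'; rw [hMUB]
  simp only [habs]
  have hsq : (1 / Real.sqrt d) ^ 2 = 1 / (d:ℝ) := by
    rw [div_pow, one_pow, Real.sq_sqrt (by positivity)]
  interval_cases k
  · simp only [mul_zero, pow_zero, Finset.sum_const, Finset.card_univ, Fintype.card_fin,
      nsmul_eq_mul]
    simp only [Nat.add_zero, Nat.choose_zero_right, Nat.cast_one]
    push_cast
    field_simp
  · have h1 : ∀ (a a' : Fin (d+1)) (b b' : Fin d),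
        (if a = a' ∧ b = b' then (1:ℝ) else if a = a' then 0 else 1 / Real.sqrt d) ^ (2*1)
        = (if a = a' ∧ b = b' then (1:ℝ) else if a = a' then 0 else 1 / d) := by
      intro a a' b b'
      by_cases h1 : a = a' <;> by_cases h2 : b = b' <;>
        simp [h1, h2, pow_mul, hsq]
    simp only [h1, sum4_aux]
    have h2 : d + 1 - 1 = d := by omega
    rw [h2, Nat.choose_one_right]
    rw [div_mul_eq_mul_div, one_mul, div_eq_div_iff (by positivity) hd0]
    field_simp
    ring
  · have h4 : Real.sqrt d ^ 4 = (d:ℝ)^2 := by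
      rw [show 4 = 2*2 from rfl, pow_mul, Real.sq_sqrt (by positivity)]
    have h1 : ∀ (a a' : Fin (d+1)) (b b' : Fin d),
        (if a = a' ∧ b = b' then (1:ℝ) else if a = a' then 0 else 1 / Real.sqrt d) ^ (2*2)
        = (if a = a' ∧ b = b' then (1:ℝ) else if a = a' then 0 else (1 / d)^2) := by
      intro a a' b b'
      by_cases h1 : a = a' <;> by_cases h2 : b = b' <;>
        simp [h1, h2, div_pow, h4]
    simp only [h1, sum4_aux]
    have h2 : d + 2 - 1 = d + 1 := by omega
    rw [h2, Nat.cast_choose_two]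
    push_cast
    have hC : (((d:ℝ)+1)*(((d:ℝ)+1)-1)/2) ≠ 0 := by
      have he : (((d:ℝ)+1)*(((d:ℝ)+1)-1)/2) = ((d:ℝ)*((d:ℝ)+1))/2 := by ring
      rw [he]; positivity
    rw [div_mul_eq_mul_div, one_mul, div_eq_div_iff (by positivity) hC]
    field_simp
    ring
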